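/- Fix W, W̃ ∈ ℂ^{n×n}, ε ≥ 0, and a positive integer k, and let C_k be the transition matrix of the directed cycle on k vertices. Then C_k ⊗ W̃ is a complex ε-approximation of C_k ⊗ W if and only if for every z ∈ ℂ with z^k = 1, z·W̃ is a complex ε-approximation of z·W. -/

import Mathlib

open Matrix Kronecker

noncomputable section

/-- The sesquilinear form `x* A y`. -/
def sesq {m : Type*} [Fintype m] (A : Matrix m m ℂ) (x y : m → ℂ) : ℂ :=
  star x ⬝ᵥ (A *ᵥ y)

/-- The squared Euclidean norm of a complex vector. -/
def vnormSq {m : Type*} [Fintype m] (x : m → ℂ) : ℝ :=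
  ∑ i, Complex.normSq (x i)

/-- `W̃` is a *complex ε-approximation* of `W`. -/
def ComplexApprox {m : Type*} [Fintype m] (ε : ℝ) (W Wt : Matrix m m ℂ) : Prop :=
  ∀ x y : m → ℂ,
    ‖sesq (W - Wt) x y‖ ≤
      ε / 2 * (vnormSq x + vnormSq y - (sesq W x x + sesq W y y).re)

/-- Transition matrix of the directed `k`-cycle (over `ℂ`):
`(C_k)_{ij} = 1` iff `i ≡ j+1 (mod k)`. -/
def cycleC (k : ℕ) : Matrix (Fin k) (Fin k) ℂ :=
  Matrix.of fun i j => if (i : ℕ) = ((j : ℕ) + 1) % k then 1 else 0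

namespace CycleAux

lemma sesq_expand {m : Type*} [Fintype m] (A : Matrix m m ℂ) (x y : m → ℂ) :
    sesq A x y = ∑ p, ∑ q, (starRingEnd ℂ) (x p) * (A p q * y q) := by
  simp [sesq, dotProduct, mulVec, Finset.mul_sum, Complex.star_def]

lemma sesq_smul {m : Type*} [Fintype m] (z : ℂ) (A : Matrix m m ℂ) (x y : m → ℂ) :
    sesq (z • A) x y = z * sesq A x y := by
  simp [sesq_expand, Finset.mul_sum, Matrix.smul_apply, smul_eq_mul]
  congr 1; ext p; congr 1; ext q; ring

lemma kron_sub {k n : ℕ} (C : Matrix (Fin k) (Fin k) ℂ) (A B : Matrix (Fin n) (Fin n) ℂ) :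
    C ⊗ₖ (A - B) = C ⊗ₖ A - C ⊗ₖ B := by
  ext p q
  simp [Matrix.kroneckerMap_apply, Matrix.sub_apply, mul_sub]

lemma abs_root {z : ℂ} {k : ℕ} (hk : 0 < k) (hz : z ^ k = 1) : ‖z‖ = 1 := by
  have h : ‖z‖ ^ k = 1 := by rw [← norm_pow, hz, norm_one]
  have h0 : 0 ≤ ‖z‖ := norm_nonneg _
  rcases lt_trichotomy ‖z‖ 1 with hlt | heq | hgt
  · exfalso; have := pow_lt_one₀ h0 hlt hk.ne'; rw [h] at this; exact lt_irrefl 1 this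
  · exact heq
  · exfalso; have := one_lt_pow₀ hgt hk.ne'; rw [h] at this; exact lt_irrefl 1 this

lemma mul_conj_root {z : ℂ} {k : ℕ} (hk : 0 < k) (hz : z ^ k = 1) :
    z * (starRingEnd ℂ) z = 1 := by
  rw [Complex.mul_conj, Complex.normSq_eq_norm_sq, abs_root hk hz]
  norm_num

lemma pow_mod {z : ℂ} {k : ℕ} (hz : z ^ k = 1) (m : ℕ) : z ^ (m % k) = z ^ m := by
  conv_rhs => rw [← Nat.div_add_mod m k]
  rw [pow_add, pow_mul, hz, one_pow, one_mul]

lemma sum_pow_root {k : ℕ} (hk : 0 < k) {z : ℂ} (hz : z ^ k = 1) :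
    ∑ t : Fin k, z ^ (t : ℕ) = if z = 1 then (k : ℂ) else 0 := by
  rw [Fin.sum_univ_eq_sum_range]
  split_ifs with h
  · simp [h]
  · have := geom_sum_eq h k
    rw [this, hz, sub_self, zero_div]

lemma dvd_iff_mod {k i j : ℕ} (hk : 0 < k) (hi : i < k) (r : ℕ) :
    k ∣ j + r + (k - 1) * i ↔ i = (j + r) % k := by
  haveI : NeZero k := ⟨hk.ne'⟩
  rw [← ZMod.natCast_eq_zero_iff]
  push_cast [Nat.cast_sub hk]
  rw [ZMod.natCast_self]
  constructor
  · intro h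
    have h2 : ((j + r : ℕ) : ZMod k) = (i : ℕ) := by push_cast; linear_combination h
    rw [ZMod.natCast_eq_natCast_iff] at h2
    have := h2.symm
    unfold Nat.ModEq at this
    rw [Nat.mod_eq_of_lt hi] at this
    exact this
  · intro h
    have h2 : (i : ZMod k) = ((j + r : ℕ) : ZMod k) := by
      rw [ZMod.natCast_eq_natCast_iff]
      unfold Nat.ModEq
      rw [Nat.mod_eq_of_lt hi]; exact h
    push_cast at h2
    linear_combination -h2

lemma conj_omega {k : ℕ} (hk : 0 < k) {ω : ℂ} (hω : ω ^ k = 1) :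
    (starRingEnd ℂ) ω = ω ^ (k - 1) := by
  have h1 : ω * (starRingEnd ℂ) ω = 1 := mul_conj_root hk hω
  have h2 : ω * ω ^ (k - 1) = 1 := by
    rw [← pow_succ', Nat.sub_add_cancel hk]; exact hω
  have hne : ω ≠ 0 := by
    intro h; rw [h] at hω; simp [zero_pow hk.ne'] at hω
  exact mul_left_cancel₀ hne (h1.trans h2.symm)

lemma core {k : ℕ} (hk : 0 < k) {ω : ℂ} (hω : IsPrimitiveRoot ω k) (r : ℕ)
    (u v : Fin k → ℂ) :
    ∑ t : Fin k, (ω ^ (t : ℕ)) ^ r *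
        ((∑ i : Fin k, (starRingEnd ℂ) ((ω ^ (t : ℕ)) ^ (i : ℕ)) * u i) *
          (∑ j : Fin k, (ω ^ (t : ℕ)) ^ (j : ℕ) * v j)) =
      (k : ℂ) * ∑ i : Fin k, ∑ j : Fin k,
        (if (i : ℕ) = ((j : ℕ) + r) % k then u i * v j else 0) := by
  have hωk : ω ^ k = 1 := hω.pow_eq_one
  have hconj : (starRingEnd ℂ) ω = ω ^ (k - 1) := conj_omega hk hωk
  have step1 : ∀ t : Fin k,
      (ω ^ (t : ℕ)) ^ r *
        ((∑ i : Fin k, (starRingEnd ℂ) ((ω ^ (t : ℕ)) ^ (i : ℕ)) * u i) *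
          (∑ j : Fin k, (ω ^ (t : ℕ)) ^ (j : ℕ) * v j)) =
      ∑ i : Fin k, ∑ j : Fin k,
        (u i * v j) * (ω ^ ((j : ℕ) + r + (k - 1) * (i : ℕ))) ^ (t : ℕ) := by
    intro t
    rw [Finset.sum_mul_sum, Finset.mul_sum]
    refine Finset.sum_congr rfl fun i _ => ?_
    rw [Finset.mul_sum]
    refine Finset.sum_congr rfl fun j _ => ?_
    have hc : (starRingEnd ℂ) ((ω ^ (t : ℕ)) ^ (i : ℕ)) =
        ω ^ ((k - 1) * ((t : ℕ) * (i : ℕ))) := by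
      rw [← pow_mul, map_pow, hconj, ← pow_mul]
    rw [hc]
    ring
  rw [Finset.sum_congr rfl fun t _ => step1 t]
  rw [Finset.sum_comm]
  rw [Finset.mul_sum]
  refine Finset.sum_congr rfl fun i _ => ?_
  rw [Finset.sum_comm, Finset.mul_sum]
  refine Finset.sum_congr rfl fun j _ => ?_
  rw [← Finset.mul_sum]
  have hz : (ω ^ ((j : ℕ) + r + (k - 1) * (i : ℕ))) ^ k = 1 := by
    rw [← pow_mul, mul_comm, pow_mul, hωk, one_pow]
  rw [sum_pow_root hk hz]
  simp only [hω.pow_eq_one_iff_dvd, dvd_iff_mod hk i.isLt r]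
  by_cases h : (i : ℕ) = ((j : ℕ) + r) % k <;> simp [h] <;> ring

lemma sum_reorder {α β γ δ M : Type*} [AddCommMonoid M] [Fintype α] [Fintype β]
    [Fintype γ] [Fintype δ] (g : α → β → γ → δ → M) :
    ∑ a : α, ∑ b : β, ∑ i : γ, ∑ j : δ, g a b i j =
      ∑ i : γ, ∑ a : α, ∑ j : δ, ∑ b : β, g a b i j := by
  rw [Finset.sum_congr rfl fun a (_ : a ∈ Finset.univ) =>
    (Finset.sum_comm : ∑ b : β, ∑ i : γ, _ = _)]
  rw [Finset.sum_comm]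
  exact Finset.sum_congr rfl fun i _ => Finset.sum_congr rfl fun a _ => Finset.sum_comm

lemma sesqKron {k n : ℕ} (hk : 0 < k) {ω : ℂ} (hω : IsPrimitiveRoot ω k)
    (A : Matrix (Fin n) (Fin n) ℂ) (x y : Fin k × Fin n → ℂ) :
    ∑ t : Fin k, ω ^ (t : ℕ) *
        sesq A (fun a => ∑ i : Fin k, (ω ^ (t : ℕ)) ^ (i : ℕ) * x (i, a))
               (fun b => ∑ j : Fin k, (ω ^ (t : ℕ)) ^ (j : ℕ) * y (j, b)) =
      (k : ℂ) * sesq (cycleC k ⊗ₖ A) x y := by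
  calc
    ∑ t : Fin k, ω ^ (t : ℕ) *
        sesq A (fun a => ∑ i : Fin k, (ω ^ (t : ℕ)) ^ (i : ℕ) * x (i, a))
               (fun b => ∑ j : Fin k, (ω ^ (t : ℕ)) ^ (j : ℕ) * y (j, b))
      = ∑ t : Fin k, ∑ a : Fin n, ∑ b : Fin n, (ω ^ (t : ℕ)) ^ 1 *
          ((∑ i : Fin k, (starRingEnd ℂ) ((ω ^ (t : ℕ)) ^ (i : ℕ)) * (starRingEnd ℂ) (x (i, a))) *
            (∑ j : Fin k, (ω ^ (t : ℕ)) ^ (j : ℕ) * (A a b * y (j, b)))) := by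
        refine Finset.sum_congr rfl fun t _ => ?_
        rw [sesq_expand, Finset.mul_sum]
        refine Finset.sum_congr rfl fun a _ => ?_
        rw [Finset.mul_sum]
        refine Finset.sum_congr rfl fun b _ => ?_
        have hA : A a b * (∑ j : Fin k, (ω ^ (t : ℕ)) ^ (j : ℕ) * y (j, b)) =
            ∑ j : Fin k, (ω ^ (t : ℕ)) ^ (j : ℕ) * (A a b * y (j, b)) := by
          rw [Finset.mul_sum]
          exact Finset.sum_congr rfl fun j _ => by ring
        simp only [map_sum, _root_.map_mul]
        rw [hA, pow_one]
    _ = ∑ a : Fin n, ∑ t : Fin k, ∑ b : Fin n, (ω ^ (t : ℕ)) ^ 1 *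
          ((∑ i : Fin k, (starRingEnd ℂ) ((ω ^ (t : ℕ)) ^ (i : ℕ)) * (starRingEnd ℂ) (x (i, a))) *
            (∑ j : Fin k, (ω ^ (t : ℕ)) ^ (j : ℕ) * (A a b * y (j, b)))) := Finset.sum_comm
    _ = ∑ a : Fin n, ∑ b : Fin n, ∑ t : Fin k, (ω ^ (t : ℕ)) ^ 1 *
          ((∑ i : Fin k, (starRingEnd ℂ) ((ω ^ (t : ℕ)) ^ (i : ℕ)) * (starRingEnd ℂ) (x (i, a))) *
            (∑ j : Fin k, (ω ^ (t : ℕ)) ^ (j : ℕ) * (A a b * y (j, b)))) :=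
        Finset.sum_congr rfl fun a _ => Finset.sum_comm
    _ = ∑ a : Fin n, ∑ b : Fin n, ((k : ℂ) * ∑ i : Fin k, ∑ j : Fin k,
          (if (i : ℕ) = ((j : ℕ) + 1) % k then
            (starRingEnd ℂ) (x (i, a)) * (A a b * y (j, b)) else 0)) :=
        Finset.sum_congr rfl fun a _ => Finset.sum_congr rfl fun b _ =>
          core hk hω 1 _ _
    _ = (k : ℂ) * sesq (cycleC k ⊗ₖ A) x y := by
        have hpull : ∑ a : Fin n, ∑ b : Fin n, ((k : ℂ) * ∑ i : Fin k, ∑ j : Fin k,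
            (if (i : ℕ) = ((j : ℕ) + 1) % k then
              (starRingEnd ℂ) (x (i, a)) * (A a b * y (j, b)) else 0)) =
            (k : ℂ) * ∑ a : Fin n, ∑ b : Fin n, ∑ i : Fin k, ∑ j : Fin k,
            (if (i : ℕ) = ((j : ℕ) + 1) % k then
              (starRingEnd ℂ) (x (i, a)) * (A a b * y (j, b)) else 0) := by
          rw [Finset.mul_sum]
          exact Finset.sum_congr rfl fun a _ => (Finset.mul_sum _ _ _).symm
        rw [hpull, sesq_expand]
        simp only [Fintype.sum_prod_type]
        congr 1
        rw [sum_reorder (fun (a b : Fin n) (i j : Fin k) =>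
          if (i : ℕ) = ((j : ℕ) + 1) % k then
            (starRingEnd ℂ) (x (i, a)) * (A a b * y (j, b)) else 0)]
        refine Finset.sum_congr rfl fun i _ => Finset.sum_congr rfl fun a _ =>
          Finset.sum_congr rfl fun j _ => Finset.sum_congr rfl fun b _ => ?_
        simp only [Matrix.kroneckerMap_apply, cycleC, Matrix.of_apply]
        split_ifs with h
        · ring
        · ring

lemma vnormSq_c {m : Type*} [Fintype m] (x : m → ℂ) :
    ((vnormSq x : ℝ) : ℂ) = ∑ p, (starRingEnd ℂ) (x p) * x p := by
  rw [vnormSq]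
  push_cast
  exact Finset.sum_congr rfl fun p _ => by rw [mul_comm, Complex.mul_conj]

lemma normKron {k n : ℕ} (hk : 0 < k) {ω : ℂ} (hω : IsPrimitiveRoot ω k)
    (x : Fin k × Fin n → ℂ) :
    ∑ t : Fin k, vnormSq (fun a : Fin n => ∑ i : Fin k, (ω ^ (t : ℕ)) ^ (i : ℕ) * x (i, a)) =
      (k : ℝ) * vnormSq x := by
  have key : ∑ t : Fin k, ((vnormSq (fun a : Fin n =>
      ∑ i : Fin k, (ω ^ (t : ℕ)) ^ (i : ℕ) * x (i, a)) : ℝ) : ℂ) =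
      ((k : ℝ) * vnormSq x : ℝ) := by
    calc
      ∑ t : Fin k, ((vnormSq (fun a : Fin n =>
          ∑ i : Fin k, (ω ^ (t : ℕ)) ^ (i : ℕ) * x (i, a)) : ℝ) : ℂ)
        = ∑ t : Fin k, ∑ a : Fin n, (ω ^ (t : ℕ)) ^ 0 *
            ((∑ i : Fin k, (starRingEnd ℂ) ((ω ^ (t : ℕ)) ^ (i : ℕ)) * (starRingEnd ℂ) (x (i, a))) *
              (∑ j : Fin k, (ω ^ (t : ℕ)) ^ (j : ℕ) * x (j, a))) := by
          refine Finset.sum_congr rfl fun t _ => ?_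
          rw [vnormSq_c]
          refine Finset.sum_congr rfl fun a _ => ?_
          simp only [map_sum, _root_.map_mul, pow_zero, one_mul]
      _ = ∑ a : Fin n, ∑ t : Fin k, (ω ^ (t : ℕ)) ^ 0 *
            ((∑ i : Fin k, (starRingEnd ℂ) ((ω ^ (t : ℕ)) ^ (i : ℕ)) * (starRingEnd ℂ) (x (i, a))) *
              (∑ j : Fin k, (ω ^ (t : ℕ)) ^ (j : ℕ) * x (j, a))) := Finset.sum_comm
      _ = ∑ a : Fin n, ((k : ℂ) * ∑ i : Fin k, ∑ j : Fin k,
            (if (i : ℕ) = ((j : ℕ) + 0) % k then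
              (starRingEnd ℂ) (x (i, a)) * x (j, a) else 0)) :=
          Finset.sum_congr rfl fun a _ => core hk hω 0 _ _
      _ = (k : ℂ) * ∑ a : Fin n, ∑ i : Fin k, (starRingEnd ℂ) (x (i, a)) * x (i, a) := by
          rw [Finset.mul_sum]
          refine Finset.sum_congr rfl fun a _ => ?_
          congr 1
          refine Finset.sum_congr rfl fun i _ => ?_
          have : ∀ j : Fin k, ((i : ℕ) = ((j : ℕ) + 0) % k) ↔ i = j := by
            intro j
            rw [Nat.add_zero, Nat.mod_eq_of_lt j.isLt, Fin.val_eq_val]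
          calc ∑ j : Fin k, (if (i : ℕ) = ((j : ℕ) + 0) % k then
                (starRingEnd ℂ) (x (i, a)) * x (j, a) else 0)
              = ∑ j : Fin k, (if i = j then (starRingEnd ℂ) (x (i, a)) * x (j, a) else 0) := by
                refine Finset.sum_congr rfl fun j _ => ?_
                rw [if_congr (this j) rfl rfl]
            _ = (starRingEnd ℂ) (x (i, a)) * x (i, a) := by
                rw [Finset.sum_ite_eq]
                simp
      _ = ((k : ℝ) * vnormSq x : ℝ) := by
          push_cast
          rw [vnormSq_c, Fintype.sum_prod_type]
          congr 1
          exact Finset.sum_comm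
  have h2 : ((∑ t : Fin k, vnormSq (fun a : Fin n =>
      ∑ i : Fin k, (ω ^ (t : ℕ)) ^ (i : ℕ) * x (i, a)) : ℝ) : ℂ) =
      ((k : ℝ) * vnormSq x : ℝ) := by
    push_cast at key ⊢
    exact key
  exact_mod_cast h2

lemma sesqKron_special {k n : ℕ} (hk : 0 < k) {z : ℂ} (hz : z ^ k = 1)
    (A : Matrix (Fin n) (Fin n) ℂ) (x y : Fin n → ℂ) :
    sesq (cycleC k ⊗ₖ A) (fun p : Fin k × Fin n => (starRingEnd ℂ) (z ^ (p.1 : ℕ)) * x p.2)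
        (fun p : Fin k × Fin n => (starRingEnd ℂ) (z ^ (p.1 : ℕ)) * y p.2) =
      (k : ℂ) * (z * sesq A x y) := by
  conv_lhs => rw [sesq_expand]
  simp only [Fintype.sum_prod_type]
  calc
    ∑ i : Fin k, ∑ a : Fin n, ∑ j : Fin k, ∑ b : Fin n,
        (starRingEnd ℂ) ((starRingEnd ℂ) (z ^ (i : ℕ)) * x a) *
          ((cycleC k ⊗ₖ A) (i, a) (j, b) * ((starRingEnd ℂ) (z ^ (j : ℕ)) * y b))
      = ∑ i : Fin k, ∑ j : Fin k, (cycleC k i j * (z ^ (i : ℕ) * (starRingEnd ℂ) (z ^ (j : ℕ)))) *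
          ∑ a : Fin n, ∑ b : Fin n, (starRingEnd ℂ) (x a) * (A a b * y b) := by
        refine Finset.sum_congr rfl fun i _ => ?_
        rw [Finset.sum_comm]
        refine Finset.sum_congr rfl fun j _ => ?_
        rw [Finset.mul_sum]
        refine Finset.sum_congr rfl fun a _ => ?_
        rw [Finset.mul_sum]
        refine Finset.sum_congr rfl fun b _ => ?_
        simp only [Matrix.kroneckerMap_apply, _root_.map_mul, Complex.conj_conj]
        ring
    _ = (∑ i : Fin k, ∑ j : Fin k, cycleC k i j * (z ^ (i : ℕ) * (starRingEnd ℂ) (z ^ (j : ℕ)))) *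
          ∑ a : Fin n, ∑ b : Fin n, (starRingEnd ℂ) (x a) * (A a b * y b) := by
        rw [Finset.sum_mul]
        exact Finset.sum_congr rfl fun i _ => (Finset.sum_mul _ _ _).symm
    _ = (k : ℂ) * (z * sesq A x y) := by
        have hT : (∑ i : Fin k, ∑ j : Fin k,
            cycleC k i j * (z ^ (i : ℕ) * (starRingEnd ℂ) (z ^ (j : ℕ)))) = (k : ℂ) * z := by
          rw [Finset.sum_comm]
          have hrow : ∀ j : Fin k, (∑ i : Fin k,
              cycleC k i j * (z ^ (i : ℕ) * (starRingEnd ℂ) (z ^ (j : ℕ)))) = z := by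
            intro j
            have hlt : ((j : ℕ) + 1) % k < k := Nat.mod_lt _ hk
            calc ∑ i : Fin k, cycleC k i j * (z ^ (i : ℕ) * (starRingEnd ℂ) (z ^ (j : ℕ)))
                = ∑ i : Fin k, (if i = (⟨((j : ℕ) + 1) % k, hlt⟩ : Fin k) then
                    z ^ (i : ℕ) * (starRingEnd ℂ) (z ^ (j : ℕ)) else 0) := by
                  refine Finset.sum_congr rfl fun i _ => ?_
                  simp only [cycleC, Matrix.of_apply, Fin.ext_iff]
                  split_ifs with h
                  · rw [one_mul]
                  · rw [zero_mul]
              _ = z ^ (((j : ℕ) + 1) % k) * (starRingEnd ℂ) (z ^ (j : ℕ)) := by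
                  rw [Finset.sum_ite_eq']
                  simp
              _ = z := by
                  rw [pow_mod hz, map_pow]
                  have : z ^ ((j : ℕ) + 1) * ((starRingEnd ℂ) z) ^ (j : ℕ) =
                      z * (z * (starRingEnd ℂ) z) ^ (j : ℕ) := by ring
                  rw [this, mul_conj_root hk hz, one_pow, mul_one]
          rw [Finset.sum_congr rfl fun j _ => hrow j]
          simp [Finset.sum_const, mul_comm]
        rw [hT, ← sesq_expand]
        ring

lemma vnorm_special {k n : ℕ} (hk : 0 < k) {z : ℂ} (hz : z ^ k = 1) (x : Fin n → ℂ) :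
    vnormSq (fun p : Fin k × Fin n => (starRingEnd ℂ) (z ^ (p.1 : ℕ)) * x p.2) =
      (k : ℝ) * vnormSq x := by
  have hn : Complex.normSq z = 1 := by
    rw [Complex.normSq_eq_norm_sq, abs_root hk hz]; norm_num
  rw [vnormSq, vnormSq]
  rw [Fintype.sum_prod_type]
  have : ∀ i : Fin k, ∀ a : Fin n,
      Complex.normSq ((starRingEnd ℂ) (z ^ (i : ℕ)) * x a) = Complex.normSq (x a) := by
    intro i a
    rw [Complex.normSq_mul, Complex.normSq_conj, _root_.map_pow, hn, one_pow, one_mul]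
  rw [Finset.sum_congr rfl fun i _ => Finset.sum_congr rfl fun a _ => this i a]
  rw [Finset.sum_const]
  simp [nsmul_eq_mul]


end CycleAux

/-- `C_k ⊗ W̃` is a complex ε-approximation of `C_k ⊗ W` iff
for every `k`-th root of unity `z`, `z·W̃` is a complex ε-approximation of `z·W`. -/
theorem cycleLift_approx_iff_roots_of_unity {n : ℕ} (ε : ℝ) (hε : 0 ≤ ε)
    (k : ℕ) (hk : 0 < k) (W Wt : Matrix (Fin n) (Fin n) ℂ) :
    ComplexApprox ε (cycleC k ⊗ₖ W) (cycleC k ⊗ₖ Wt) ↔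
      ∀ z : ℂ, z ^ k = 1 → ComplexApprox ε (z • W) (z • Wt) := by
  have hkR : (0 : ℝ) < (k : ℝ) := by exact_mod_cast hk
  constructor
  · intro h z hz x y
    have H := h (fun p : Fin k × Fin n => (starRingEnd ℂ) (z ^ (p.1 : ℕ)) * x p.2)
               (fun p : Fin k × Fin n => (starRingEnd ℂ) (z ^ (p.1 : ℕ)) * y p.2)
    rw [← CycleAux.kron_sub] at H
    rw [CycleAux.sesqKron_special hk hz (W - Wt) x y] at H
    rw [CycleAux.sesqKron_special hk hz W x x, CycleAux.sesqKron_special hk hz W y y] at H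
    rw [CycleAux.vnorm_special hk hz x, CycleAux.vnorm_special hk hz y] at H
    rw [norm_mul, Complex.norm_natCast] at H
    have hre : ((k : ℂ) * (z * sesq W x x) + (k : ℂ) * (z * sesq W y y)).re
        = (k : ℝ) * (z * sesq W x x + z * sesq W y y).re := by
      have e : ((k : ℂ) * (z * sesq W x x) + (k : ℂ) * (z * sesq W y y))
          = (k : ℂ) * (z * sesq W x x + z * sesq W y y) := by ring
      rw [e]
      simp [Complex.mul_re]
    rw [hre] at H
    have e1 : (z • W - z • Wt) = z • (W - Wt) := (smul_sub z W Wt).symm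
    rw [e1]
    simp only [CycleAux.sesq_smul]
    have hR : ε / 2 * ((k : ℝ) * vnormSq x + (k : ℝ) * vnormSq y -
        (k : ℝ) * (z * sesq W x x + z * sesq W y y).re) =
        (k : ℝ) * (ε / 2 * (vnormSq x + vnormSq y -
          (z * sesq W x x + z * sesq W y y).re)) := by ring
    rw [hR] at H
    exact le_of_mul_le_mul_left H hkR
  · intro h x y
    have hω : IsPrimitiveRoot (Complex.exp (2 * Real.pi * Complex.I / k)) k :=
      Complex.isPrimitiveRoot_exp k hk.ne'
    set ω : ℂ := Complex.exp (2 * Real.pi * Complex.I / k) with hωdef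
    have hωk : ω ^ k = 1 := hω.pow_eq_one
    have hroot : ∀ t : Fin k, (ω ^ (t : ℕ)) ^ k = 1 := fun t => by
      rw [← pow_mul, mul_comm, pow_mul, hωk, one_pow]
    have key1 := CycleAux.sesqKron hk hω (W - Wt) x y
    have key2 := CycleAux.sesqKron hk hω W x x
    have key3 := CycleAux.sesqKron hk hω W y y
    have keyN1 := CycleAux.normKron hk hω x
    have keyN2 := CycleAux.normKron hk hω y
    have Ht : ∀ t : Fin k,
        ‖ω ^ (t : ℕ) * sesq (W - Wt)
            (fun a => ∑ i : Fin k, (ω ^ (t : ℕ)) ^ (i : ℕ) * x (i, a))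
            (fun b => ∑ j : Fin k, (ω ^ (t : ℕ)) ^ (j : ℕ) * y (j, b))‖ ≤
          ε / 2 * (vnormSq (fun a => ∑ i : Fin k, (ω ^ (t : ℕ)) ^ (i : ℕ) * x (i, a)) +
            vnormSq (fun b => ∑ j : Fin k, (ω ^ (t : ℕ)) ^ (j : ℕ) * y (j, b)) -
            (ω ^ (t : ℕ) * sesq W (fun a => ∑ i : Fin k, (ω ^ (t : ℕ)) ^ (i : ℕ) * x (i, a))
                (fun a => ∑ i : Fin k, (ω ^ (t : ℕ)) ^ (i : ℕ) * x (i, a)) +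
              ω ^ (t : ℕ) * sesq W (fun b => ∑ j : Fin k, (ω ^ (t : ℕ)) ^ (j : ℕ) * y (j, b))
                (fun b => ∑ j : Fin k, (ω ^ (t : ℕ)) ^ (j : ℕ) * y (j, b))).re) := by
      intro t
      have H0 := h (ω ^ (t : ℕ)) (hroot t)
        (fun a => ∑ i : Fin k, (ω ^ (t : ℕ)) ^ (i : ℕ) * x (i, a))
        (fun b => ∑ j : Fin k, (ω ^ (t : ℕ)) ^ (j : ℕ) * y (j, b))
      rw [show (ω ^ (t : ℕ)) • W - (ω ^ (t : ℕ)) • Wt = (ω ^ (t : ℕ)) • (W - Wt) from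
        (smul_sub _ _ _).symm] at H0
      simpa only [CycleAux.sesq_smul] using H0
    have main : (k : ℝ) * ‖sesq (cycleC k ⊗ₖ W - cycleC k ⊗ₖ Wt) x y‖ ≤
        (k : ℝ) * (ε / 2 * (vnormSq x + vnormSq y -
          (sesq (cycleC k ⊗ₖ W) x x + sesq (cycleC k ⊗ₖ W) y y).re)) := by
      have hsum : (∑ t : Fin k, ω ^ (t : ℕ) * sesq (W - Wt)
          (fun a => ∑ i : Fin k, (ω ^ (t : ℕ)) ^ (i : ℕ) * x (i, a))
          (fun b => ∑ j : Fin k, (ω ^ (t : ℕ)) ^ (j : ℕ) * y (j, b))) =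
          (k : ℂ) * sesq (cycleC k ⊗ₖ W - cycleC k ⊗ₖ Wt) x y := by
        rw [← CycleAux.kron_sub]; exact key1
      calc (k : ℝ) * ‖sesq (cycleC k ⊗ₖ W - cycleC k ⊗ₖ Wt) x y‖
          = ‖∑ t : Fin k, ω ^ (t : ℕ) * sesq (W - Wt)
              (fun a => ∑ i : Fin k, (ω ^ (t : ℕ)) ^ (i : ℕ) * x (i, a))
              (fun b => ∑ j : Fin k, (ω ^ (t : ℕ)) ^ (j : ℕ) * y (j, b))‖ := by
            rw [hsum, norm_mul, Complex.norm_natCast]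
        _ ≤ ∑ t : Fin k, ‖ω ^ (t : ℕ) * sesq (W - Wt)
              (fun a => ∑ i : Fin k, (ω ^ (t : ℕ)) ^ (i : ℕ) * x (i, a))
              (fun b => ∑ j : Fin k, (ω ^ (t : ℕ)) ^ (j : ℕ) * y (j, b))‖ := by
            simpa using norm_sum_le Finset.univ
              (fun t : Fin k => ω ^ (t : ℕ) * sesq (W - Wt)
                (fun a => ∑ i : Fin k, (ω ^ (t : ℕ)) ^ (i : ℕ) * x (i, a))
                (fun b => ∑ j : Fin k, (ω ^ (t : ℕ)) ^ (j : ℕ) * y (j, b)))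
        _ ≤ ∑ t : Fin k, ε / 2 *
              (vnormSq (fun a => ∑ i : Fin k, (ω ^ (t : ℕ)) ^ (i : ℕ) * x (i, a)) +
                vnormSq (fun b => ∑ j : Fin k, (ω ^ (t : ℕ)) ^ (j : ℕ) * y (j, b)) -
                (ω ^ (t : ℕ) * sesq W (fun a => ∑ i : Fin k, (ω ^ (t : ℕ)) ^ (i : ℕ) * x (i, a))
                    (fun a => ∑ i : Fin k, (ω ^ (t : ℕ)) ^ (i : ℕ) * x (i, a)) +
                  ω ^ (t : ℕ) * sesq W (fun b => ∑ j : Fin k, (ω ^ (t : ℕ)) ^ (j : ℕ) * y (j, b))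
                    (fun b => ∑ j : Fin k, (ω ^ (t : ℕ)) ^ (j : ℕ) * y (j, b))).re) :=
            Finset.sum_le_sum fun t _ => Ht t
        _ = ε / 2 * ((k : ℝ) * vnormSq x + (k : ℝ) * vnormSq y -
              (k : ℝ) * (sesq (cycleC k ⊗ₖ W) x x + sesq (cycleC k ⊗ₖ W) y y).re) := by
            rw [← Finset.mul_sum]
            congr 1
            rw [Finset.sum_sub_distrib, Finset.sum_add_distrib, keyN1, keyN2]
            congr 1
            calc ∑ t : Fin k,
                  (ω ^ (t : ℕ) * sesq W (fun a => ∑ i : Fin k, (ω ^ (t : ℕ)) ^ (i : ℕ) * x (i, a))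
                      (fun a => ∑ i : Fin k, (ω ^ (t : ℕ)) ^ (i : ℕ) * x (i, a)) +
                    ω ^ (t : ℕ) * sesq W (fun b => ∑ j : Fin k, (ω ^ (t : ℕ)) ^ (j : ℕ) * y (j, b))
                      (fun b => ∑ j : Fin k, (ω ^ (t : ℕ)) ^ (j : ℕ) * y (j, b))).re
                = (∑ t : Fin k,
                    (ω ^ (t : ℕ) * sesq W (fun a => ∑ i : Fin k, (ω ^ (t : ℕ)) ^ (i : ℕ) * x (i, a))
                        (fun a => ∑ i : Fin k, (ω ^ (t : ℕ)) ^ (i : ℕ) * x (i, a)) +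
                      ω ^ (t : ℕ) * sesq W (fun b => ∑ j : Fin k, (ω ^ (t : ℕ)) ^ (j : ℕ) * y (j, b))
                        (fun b => ∑ j : Fin k, (ω ^ (t : ℕ)) ^ (j : ℕ) * y (j, b)))).re :=
                  (Complex.re_sum _ _).symm
              _ = ((k : ℂ) * sesq (cycleC k ⊗ₖ W) x x + (k : ℂ) * sesq (cycleC k ⊗ₖ W) y y).re := by
                  rw [Finset.sum_add_distrib, key2, key3]
              _ = (k : ℝ) * (sesq (cycleC k ⊗ₖ W) x x + sesq (cycleC k ⊗ₖ W) y y).re := by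
                  have e : ((k : ℂ) * sesq (cycleC k ⊗ₖ W) x x + (k : ℂ) * sesq (cycleC k ⊗ₖ W) y y)
                      = (k : ℂ) * (sesq (cycleC k ⊗ₖ W) x x + sesq (cycleC k ⊗ₖ W) y y) := by ring
                  rw [e]
                  simp [Complex.mul_re]
        _ = (k : ℝ) * (ε / 2 * (vnormSq x + vnormSq y -
              (sesq (cycleC k ⊗ₖ W) x x + sesq (cycleC k ⊗ₖ W) y y).re)) := by ring
    exact le_of_mul_le_mul_left main hkR

end
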